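/- Let A be an m×n matrix all of whose columns are regular (equivalently, all entries of A are real), let B ∈ (ℝ ∪ {−∞})^{l×n} be a column-regular matrix, and let p ∈ ℝ^m and q ∈ ℝ^l be regular vectors. Denote by a_i and b_i the i-th columns of A and B. Then the maximum of q⁻ B x ⊗ (A x)⁻ p over all regular vectors x ∈ ℝⁿ equals Δ = q⁻ B A⁻ p, and a regular vector x is a maximizer if and only if there exist α ∈ ℝ and indices k attaining max_{1≤i≤n} q⁻ b_i ⊗ a_i⁻ p and s attaining max_{1≤i≤m} (p_i − a_{ik}) such that x_k = α ⊗ a_k⁻ p and x_j ≤ α ⊗ (p_s − a_{sj}) for all j ≠ k. -/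

import Mathlib

open Finset

noncomputable section

namespace MaxPlus

/-- Max-plus multiplicative inverse: `-a` for real `a`, `⊥` for `⊥`. -/
def tinv (a : WithBot ℝ) : WithBot ℝ := WithBot.map (fun r => -r) a

/-- Max-plus rational power `a^(1/k) = a / k`. -/
def trt (a : WithBot ℝ) (k : ℕ) : WithBot ℝ := WithBot.map (fun r => r / (k : ℝ)) a

/-- A vector is regular if it has no `⊥` (= -∞) entries. -/
def Reg {n : ℕ} (x : Fin n → WithBot ℝ) : Prop := ∀ i, x i ≠ ⊥

/-- `cdot q x = q⁻ x`, the max-plus product of the conjugate row vector `q⁻` with `x`. -/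
def cdot {n : ℕ} (q x : Fin n → WithBot ℝ) : WithBot ℝ :=
  Finset.univ.sup fun i => tinv (q i) + x i

/-- Max-plus matrix-vector product. -/
def mulVec {m n : ℕ} (A : Matrix (Fin m) (Fin n) (WithBot ℝ)) (x : Fin n → WithBot ℝ) :
    Fin m → WithBot ℝ := fun i => Finset.univ.sup fun j => A i j + x j

/-- Max-plus matrix product. -/
def tmul {l m n : ℕ} (A : Matrix (Fin l) (Fin m) (WithBot ℝ))
    (B : Matrix (Fin m) (Fin n) (WithBot ℝ)) : Matrix (Fin l) (Fin n) (WithBot ℝ) :=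
  fun i j => Finset.univ.sup fun k => A i k + B k j

/-- Multiplicative conjugate transpose of a matrix. -/
def conjM {m n : ℕ} (A : Matrix (Fin m) (Fin n) (WithBot ℝ)) :
    Matrix (Fin n) (Fin m) (WithBot ℝ) := fun i j => tinv (A j i)

/-- Max-plus identity matrix. -/
def tId {n : ℕ} : Matrix (Fin n) (Fin n) (WithBot ℝ) := fun i j => if i = j then 0 else ⊥

/-- Max-plus matrix power. -/
def tpow {n : ℕ} (A : Matrix (Fin n) (Fin n) (WithBot ℝ)) : ℕ → Matrix (Fin n) (Fin n) (WithBot ℝ)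
  | 0 => tId
  | k + 1 => tmul A (tpow A k)

/-- Max-plus trace. -/
def ttr {n : ℕ} (A : Matrix (Fin n) (Fin n) (WithBot ℝ)) : WithBot ℝ :=
  Finset.univ.sup fun i => A i i

/-- `Tr(A) = tr A ⊕ tr A² ⊕ ⋯ ⊕ tr Aⁿ`. -/
def TrOp {n : ℕ} (A : Matrix (Fin n) (Fin n) (WithBot ℝ)) : WithBot ℝ :=
  (Finset.Icc 1 n).sup fun m => ttr (tpow A m)

/-- Kleene star `A* = I ⊕ A ⊕ ⋯ ⊕ A^(n-1)`. -/
def kstar {n : ℕ} (A : Matrix (Fin n) (Fin n) (WithBot ℝ)) : Matrix (Fin n) (Fin n) (WithBot ℝ) :=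
  fun i j => (Finset.range n).sup fun k => tpow A k i j

/-- Max-plus spectral radius `λ = ⊕_{m=1}^n (tr A^m)^(1/m)`. -/
def specRad {n : ℕ} (A : Matrix (Fin n) (Fin n) (WithBot ℝ)) : WithBot ℝ :=
  (Finset.Icc 1 n).sup fun m => trt (ttr (tpow A m)) m

/-- `prodAB A B [i₁, …, i_k] = A B^{i₁} A B^{i₂} ⋯ A B^{i_k}`. -/
def prodAB {n : ℕ} (A B : Matrix (Fin n) (Fin n) (WithBot ℝ)) :
    List ℕ → Matrix (Fin n) (Fin n) (WithBot ℝ)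
  | [] => tId
  | i :: t => tmul (tmul A (tpow B i)) (prodAB A B t)

/-- The all-ones (all-`𝟙 = 0`) vector. -/
def onesV (n : ℕ) : Fin n → WithBot ℝ := fun _ => 0

end MaxPlus

open MaxPlus

namespace MaxPlusAux

open MaxPlus Finset

lemma wb_sup_add {ι : Type*} (s : Finset ι) (f : ι → WithBot ℝ) (a : WithBot ℝ) :
    s.sup f + a = s.sup fun i => f i + a := by
  rcases s.eq_empty_or_nonempty with h | h
  · simp [h]
  · obtain ⟨i, hi, hv⟩ := Finset.exists_mem_eq_sup s h f
    refine le_antisymm ?_ (Finset.sup_le fun j hj => add_le_add_left (Finset.le_sup (f := f) hj) a)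
    rw [hv]; exact Finset.le_sup (f := fun i => f i + a) hi

lemma wb_add_sup {ι : Type*} (s : Finset ι) (f : ι → WithBot ℝ) (a : WithBot ℝ) :
    a + s.sup f = s.sup fun i => a + f i := by
  rcases s.eq_empty_or_nonempty with h | h
  · simp [h]
  · obtain ⟨i, hi, hv⟩ := Finset.exists_mem_eq_sup s h f
    refine le_antisymm ?_ (Finset.sup_le fun j hj => add_le_add_right (Finset.le_sup (f := f) hj) a)
    rw [hv]; exact Finset.le_sup (f := fun i => a + f i) hi

lemma tinv_add (a b : WithBot ℝ) : tinv (a + b) = tinv a + tinv b := by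
  induction a using WithBot.recBotCoe with
  | bot => simp [tinv]
  | coe a =>
    induction b using WithBot.recBotCoe with
    | bot => simp [tinv]
    | coe b => simp [tinv, ← WithBot.coe_add, neg_add, add_comm]

lemma tinv_coe (r : ℝ) : tinv (r : WithBot ℝ) = ((-r : ℝ) : WithBot ℝ) := rfl

lemma tinv_ne_bot {a : WithBot ℝ} (h : a ≠ ⊥) : tinv a ≠ ⊥ := by
  obtain ⟨r, rfl⟩ := WithBot.ne_bot_iff_exists.mp h |>.imp fun r hr => hr.symm
  simp [tinv]

lemma tinv_le_tinv' {a b : WithBot ℝ} (ha : a ≠ ⊥) (h : a ≤ b) : tinv b ≤ tinv a := by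
  obtain ⟨r, rfl⟩ := WithBot.ne_bot_iff_exists.mp ha |>.imp fun r hr => hr.symm
  have hb : b ≠ ⊥ := fun hb => ha (le_bot_iff.mp (hb ▸ h))
  obtain ⟨t, rfl⟩ := WithBot.ne_bot_iff_exists.mp hb |>.imp fun r hr => hr.symm
  rw [tinv_coe, tinv_coe, WithBot.coe_le_coe]
  have := WithBot.coe_le_coe.mp h
  linarith

lemma sup_ne_bot_of_mem {ι : Type*} {s : Finset ι} {f : ι → WithBot ℝ} {i : ι}
    (hi : i ∈ s) (h : f i ≠ ⊥) : s.sup f ≠ ⊥ :=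
  fun hb => h (le_bot_iff.mp (hb ▸ Finset.le_sup hi))

lemma add_tinv_cancel {a : WithBot ℝ} (h : a ≠ ⊥) : a + tinv a = 0 := by
  obtain ⟨r, rfl⟩ := WithBot.ne_bot_iff_exists.mp h |>.imp fun r hr => hr.symm
  rw [tinv_coe, ← WithBot.coe_add]; norm_num

lemma tinv_add_cancel {a : WithBot ℝ} (h : a ≠ ⊥) : tinv a + a = 0 := by
  rw [add_comm]; exact add_tinv_cancel h

/-- `q⁻ (B x) = ⊕_i (q⁻ b_i) ⊗ x_i`. -/
lemma cdot_mulVec_eq {l n : ℕ} (q : Fin l → WithBot ℝ) (B : Matrix (Fin l) (Fin n) (WithBot ℝ))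
    (x : Fin n → WithBot ℝ) :
    cdot q (mulVec B x) = Finset.univ.sup fun i => cdot q (fun r => B r i) + x i := by
  unfold cdot mulVec
  calc (Finset.univ.sup fun r => tinv (q r) + Finset.univ.sup fun i => B r i + x i)
      = Finset.univ.sup fun r => Finset.univ.sup fun i => tinv (q r) + (B r i + x i) := by
        exact Finset.sup_congr rfl fun r _ => wb_add_sup _ _ _
    _ = Finset.univ.sup fun i => Finset.univ.sup fun r => tinv (q r) + (B r i + x i) :=
        Finset.sup_comm _ _ _
    _ = Finset.univ.sup fun i => (Finset.univ.sup fun r => tinv (q r) + B r i) + x i := by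
        refine Finset.sup_congr rfl fun i _ => ?_
        rw [wb_sup_add]
        exact Finset.sup_congr rfl fun r _ => by rw [add_assoc]

/-- `Δ = ⊕_i (q⁻ b_i) ⊗ (a_i⁻ p)`. -/
lemma delta_eq {l m n : ℕ} (q : Fin l → WithBot ℝ) (B : Matrix (Fin l) (Fin n) (WithBot ℝ))
    (A : Matrix (Fin m) (Fin n) (WithBot ℝ)) (p : Fin m → WithBot ℝ) :
    cdot q (mulVec (tmul B (conjM A)) p) =
      Finset.univ.sup fun i => cdot q (fun r => B r i) + cdot (fun r => A r i) p := by
  unfold cdot mulVec tmul conjM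
  calc (Finset.univ.sup fun r => tinv (q r) +
          Finset.univ.sup fun s => (Finset.univ.sup fun j => B r j + tinv (A s j)) + p s)
      = Finset.univ.sup fun r => Finset.univ.sup fun s => Finset.univ.sup fun j =>
          tinv (q r) + ((B r j + tinv (A s j)) + p s) := by
        refine Finset.sup_congr rfl fun r _ => ?_
        rw [wb_add_sup]
        refine Finset.sup_congr rfl fun s _ => ?_
        rw [wb_sup_add, wb_add_sup]
    _ = Finset.univ.sup fun r => Finset.univ.sup fun j => Finset.univ.sup fun s =>
          tinv (q r) + ((B r j + tinv (A s j)) + p s) :=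
        Finset.sup_congr rfl fun r _ => Finset.sup_comm _ _ _
    _ = Finset.univ.sup fun j => Finset.univ.sup fun r => Finset.univ.sup fun s =>
          tinv (q r) + ((B r j + tinv (A s j)) + p s) := Finset.sup_comm _ _ _
    _ = Finset.univ.sup fun j => (Finset.univ.sup fun r => tinv (q r) + B r j) +
          Finset.univ.sup fun s => tinv (A s j) + p s := by
        refine Finset.sup_congr rfl fun j _ => ?_
        rw [wb_sup_add]
        refine Finset.sup_congr rfl fun r _ => ?_
        rw [wb_add_sup]
        refine Finset.sup_congr rfl fun s _ => ?_
        abel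

end MaxPlusAux

open MaxPlusAux

/-- maximization of `q⁻ B x ⊗ (A x)⁻ p`. -/
theorem stmt_8 {l m n : ℕ} (hl : 0 < l) (hm : 0 < m) (hn : 0 < n)
    (A : Matrix (Fin m) (Fin n) (WithBot ℝ)) (hA : ∀ i j, A i j ≠ ⊥)
    (B : Matrix (Fin l) (Fin n) (WithBot ℝ)) (hB : ∀ j, ∃ i, B i j ≠ ⊥)
    (p : Fin m → WithBot ℝ) (hp : Reg p)
    (q : Fin l → WithBot ℝ) (hq : Reg q)
    (Δ : WithBot ℝ) (hΔ : Δ = cdot q (mulVec (tmul B (conjM A)) p)) :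
    IsGreatest {v | ∃ x : Fin n → WithBot ℝ, Reg x ∧
        cdot q (mulVec B x) + cdot (mulVec A x) p = v} Δ ∧
      ∀ x : Fin n → WithBot ℝ, Reg x →
        (cdot q (mulVec B x) + cdot (mulVec A x) p = Δ ↔
          ∃ (α : ℝ) (k : Fin n) (s : Fin m),
            (∀ i : Fin n, cdot q (fun r => B r i) + cdot (fun r => A r i) p ≤
                cdot q (fun r => B r k) + cdot (fun r => A r k) p) ∧
            (∀ i : Fin m, tinv (A i k) + p i ≤ tinv (A s k) + p s) ∧
            x k = (α : WithBot ℝ) + cdot (fun r => A r k) p ∧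
            ∀ j, j ≠ k → x j ≤ (α : WithBot ℝ) + (tinv (A s j) + p s)) := by
  have hmne : (Finset.univ : Finset (Fin m)).Nonempty := ⟨⟨0, hm⟩, Finset.mem_univ _⟩
  have hnne : (Finset.univ : Finset (Fin n)).Nonempty := ⟨⟨0, hn⟩, Finset.mem_univ _⟩
  -- abbreviations
  let c : Fin n → WithBot ℝ := fun i => cdot q (fun r => B r i)
  let d : Fin n → WithBot ℝ := fun i => cdot (fun r => A r i) p
  have hc_bot : ∀ i, c i ≠ ⊥ := by
    intro i
    obtain ⟨r, hr⟩ := hB i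
    exact sup_ne_bot_of_mem (f := fun r => tinv (q r) + B r i) (Finset.mem_univ r)
      (WithBot.add_ne_bot.mpr ⟨tinv_ne_bot (hq r), hr⟩)
  have hd_bot : ∀ i, d i ≠ ⊥ := fun i =>
    sup_ne_bot_of_mem (f := fun t => tinv (A t i) + p t) (Finset.mem_univ ⟨0, hm⟩)
      (WithBot.add_ne_bot.mpr ⟨tinv_ne_bot (hA _ i), hp _⟩)
  have hd_le : ∀ i t, tinv (A t i) + p t ≤ d i := fun i t =>
    Finset.le_sup (f := fun t => tinv (A t i) + p t) (Finset.mem_univ t)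
  have hΔ' : Δ = Finset.univ.sup fun i => c i + d i := hΔ.trans (delta_eq q B A p)
  -- the value of mulVec A x at a row
  have hAx_ge : ∀ (x : Fin n → WithBot ℝ) (t : Fin m) (j : Fin n),
      A t j + x j ≤ mulVec A x t := fun x t j =>
    Finset.le_sup (f := fun j => A t j + x j) (Finset.mem_univ j)
  have hAx_bot : ∀ (x : Fin n → WithBot ℝ), Reg x → ∀ t, mulVec A x t ≠ ⊥ := by
    intro x hx t
    exact sup_ne_bot_of_mem (f := fun j => A t j + x j) (Finset.mem_univ ⟨0, hn⟩)
      (WithBot.add_ne_bot.mpr ⟨hA _ _, hx _⟩)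
  -- upper bound
  have hub : ∀ x : Fin n → WithBot ℝ, Reg x →
      cdot q (mulVec B x) + cdot (mulVec A x) p ≤ Δ := by
    intro x hx
    rw [cdot_mulVec_eq, hΔ', wb_sup_add]
    refine Finset.sup_le fun i _ => ?_
    refine le_trans ?_ (Finset.le_sup (f := fun i => c i + d i) (Finset.mem_univ i))
    have hT : cdot (mulVec A x) p ≤ tinv (x i) + d i := by
      refine Finset.sup_le fun t _ => ?_
      have h2 : tinv (mulVec A x t) ≤ tinv (A t i + x i) :=
        tinv_le_tinv' (WithBot.add_ne_bot.mpr ⟨hA t i, hx i⟩) (hAx_ge x t i)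
      rw [tinv_add] at h2
      calc tinv (mulVec A x t) + p t ≤ (tinv (A t i) + tinv (x i)) + p t :=
            add_le_add_left h2 _
        _ = tinv (x i) + (tinv (A t i) + p t) := by abel
        _ ≤ tinv (x i) + d i := add_le_add_right (hd_le i t) _
    calc (c i + x i) + cdot (mulVec A x) p ≤ (c i + x i) + (tinv (x i) + d i) :=
          add_le_add_right hT _
      _ = c i + ((x i + tinv (x i)) + d i) := by abel
      _ = c i + d i := by rw [add_tinv_cancel (hx i), zero_add]
  -- sufficiency of the characterization
  have key2 : ∀ x : Fin n → WithBot ℝ, Reg x → ∀ (α : ℝ) (k : Fin n) (s : Fin m),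
      (∀ i, c i + d i ≤ c k + d k) →
      (∀ i : Fin m, tinv (A i k) + p i ≤ tinv (A s k) + p s) →
      x k = (α : WithBot ℝ) + d k →
      (∀ j, j ≠ k → x j ≤ (α : WithBot ℝ) + (tinv (A s j) + p s)) →
      cdot q (mulVec B x) + cdot (mulVec A x) p = Δ := by
    intro x hx α k s h1 h2 h3 h4
    have hdk : d k = tinv (A s k) + p s :=
      le_antisymm (Finset.sup_le (f := fun i => tinv (A i k) + p i) fun i _ => h2 i)
        (hd_le k s)
    have hΔk : Δ = c k + d k :=
      hΔ'.trans (le_antisymm (Finset.sup_le (f := fun i => c i + d i) fun i _ => h1 i)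
        (Finset.le_sup (f := fun i => c i + d i) (Finset.mem_univ k)))
    have hxall : ∀ j, x j ≤ (α : WithBot ℝ) + (tinv (A s j) + p s) := by
      intro j
      rcases eq_or_ne j k with rfl | hjk
      · rw [h3, hdk]
      · exact h4 j hjk
    -- first factor
    have hS : cdot q (mulVec B x) = (α : WithBot ℝ) + (c k + d k) := by
      rw [cdot_mulVec_eq]
      refine le_antisymm (Finset.sup_le fun i _ => ?_) ?_
      · calc c i + x i ≤ c i + ((α : WithBot ℝ) + (tinv (A s i) + p s)) :=
              add_le_add_right (hxall i) _
          _ = (α : WithBot ℝ) + (c i + (tinv (A s i) + p s)) := by abel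
          _ ≤ (α : WithBot ℝ) + (c i + d i) :=
              add_le_add_right (add_le_add_right (hd_le i s) _) _
          _ ≤ (α : WithBot ℝ) + (c k + d k) := add_le_add_right (h1 i) _
      · refine le_trans ?_ (Finset.le_sup (f := fun i => c i + x i) (Finset.mem_univ k))
        show (α : WithBot ℝ) + (c k + d k) ≤ c k + x k
        rw [h3]
        apply le_of_eq
        abel
    -- second factor
    have hes : mulVec A x s = (α : WithBot ℝ) + p s := by
      refine le_antisymm (Finset.sup_le fun j _ => ?_) ?_
      · calc A s j + x j ≤ A s j + ((α : WithBot ℝ) + (tinv (A s j) + p s)) :=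
              add_le_add_right (hxall j) _
          _ = (α : WithBot ℝ) + ((A s j + tinv (A s j)) + p s) := by abel
          _ = (α : WithBot ℝ) + p s := by rw [add_tinv_cancel (hA s j), zero_add]
      · refine le_trans ?_ (hAx_ge x s k)
        rw [h3, hdk]
        apply le_of_eq
        calc (α : WithBot ℝ) + p s
            = (A s k + tinv (A s k)) + ((α : WithBot ℝ) + p s) := by
              rw [add_tinv_cancel (hA s k), zero_add]
          _ = A s k + ((α : WithBot ℝ) + (tinv (A s k) + p s)) := by abel
    have hT : cdot (mulVec A x) p = ((-α : ℝ) : WithBot ℝ) := by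
      refine le_antisymm (Finset.sup_le fun t _ => ?_) ?_
      · have hge : (α : WithBot ℝ) + p t ≤ mulVec A x t := by
          refine le_trans ?_ (hAx_ge x t k)
          rw [h3]
          calc (α : WithBot ℝ) + p t
              = (A t k + tinv (A t k)) + ((α : WithBot ℝ) + p t) := by
                rw [add_tinv_cancel (hA t k), zero_add]
            _ = (α : WithBot ℝ) + (A t k + (tinv (A t k) + p t)) := by abel
            _ ≤ (α : WithBot ℝ) + (A t k + d k) :=
                add_le_add_right (add_le_add_right (hd_le k t) _) _
            _ = A t k + ((α : WithBot ℝ) + d k) := by abel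
        have h2' : tinv (mulVec A x t) ≤ tinv ((α : WithBot ℝ) + p t) :=
          tinv_le_tinv' (WithBot.add_ne_bot.mpr ⟨WithBot.coe_ne_bot, hp t⟩) hge
        rw [tinv_add, tinv_coe] at h2'
        calc tinv (mulVec A x t) + p t
            ≤ (((-α : ℝ) : WithBot ℝ) + tinv (p t)) + p t := add_le_add_left h2' _
          _ = ((-α : ℝ) : WithBot ℝ) + (tinv (p t) + p t) := by abel
          _ = ((-α : ℝ) : WithBot ℝ) := by rw [tinv_add_cancel (hp t), add_zero]
      · refine le_trans ?_ (Finset.le_sup (f := fun t => tinv (mulVec A x t) + p t)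
          (Finset.mem_univ s))
        show ((-α : ℝ) : WithBot ℝ) ≤ tinv (mulVec A x s) + p s
        rw [hes, tinv_add, tinv_coe]
        apply le_of_eq
        calc ((-α : ℝ) : WithBot ℝ)
            = ((-α : ℝ) : WithBot ℝ) + (tinv (p s) + p s) := by
              rw [tinv_add_cancel (hp s), add_zero]
          _ = (((-α : ℝ) : WithBot ℝ) + tinv (p s)) + p s := by abel
    rw [hS, hT, hΔk]
    obtain ⟨ck, hck⟩ : ∃ r : ℝ, c k = ↑r :=
      (WithBot.ne_bot_iff_exists.mp (hc_bot k)).imp fun r hr => hr.symm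
    obtain ⟨dk, hdk'⟩ : ∃ r : ℝ, d k = ↑r :=
      (WithBot.ne_bot_iff_exists.mp (hd_bot k)).imp fun r hr => hr.symm
    rw [hck, hdk']
    rw [← WithBot.coe_add, ← WithBot.coe_add, ← WithBot.coe_add, WithBot.coe_eq_coe]
    ring
  -- necessity of the characterization
  have key3 : ∀ x : Fin n → WithBot ℝ, Reg x →
      cdot q (mulVec B x) + cdot (mulVec A x) p = Δ →
      ∃ (α : ℝ) (k : Fin n) (s : Fin m),
        (∀ i, c i + d i ≤ c k + d k) ∧
        (∀ i : Fin m, tinv (A i k) + p i ≤ tinv (A s k) + p s) ∧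
        x k = (α : WithBot ℝ) + d k ∧
        (∀ j, j ≠ k → x j ≤ (α : WithBot ℝ) + (tinv (A s j) + p s)) := by
    intro x hx hfx
    rw [cdot_mulVec_eq] at hfx
    obtain ⟨k, -, hSk⟩ :=
      Finset.exists_mem_eq_sup Finset.univ hnne fun i => c i + x i
    obtain ⟨t, -, hTt⟩ :=
      Finset.exists_mem_eq_sup Finset.univ hmne fun t => tinv (mulVec A x t) + p t
    have hfx' : (c k + x k) + (tinv (mulVec A x t) + p t) = Δ := by
      rw [← hSk, ← hTt]; exact hfx
    -- realifications
    obtain ⟨ck, hck⟩ : ∃ r : ℝ, c k = ↑r :=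
      (WithBot.ne_bot_iff_exists.mp (hc_bot k)).imp fun r hr => hr.symm
    obtain ⟨dk, hdk⟩ : ∃ r : ℝ, d k = ↑r :=
      (WithBot.ne_bot_iff_exists.mp (hd_bot k)).imp fun r hr => hr.symm
    obtain ⟨xk, hxk⟩ : ∃ r : ℝ, x k = ↑r :=
      (WithBot.ne_bot_iff_exists.mp (hx k)).imp fun r hr => hr.symm
    obtain ⟨pt, hpt⟩ : ∃ r : ℝ, p t = ↑r :=
      (WithBot.ne_bot_iff_exists.mp (hp t)).imp fun r hr => hr.symm
    obtain ⟨atk, hatk⟩ : ∃ r : ℝ, A t k = ↑r :=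
      (WithBot.ne_bot_iff_exists.mp (hA t k)).imp fun r hr => hr.symm
    obtain ⟨et, het⟩ : ∃ r : ℝ, mulVec A x t = ↑r :=
      (WithBot.ne_bot_iff_exists.mp (hAx_bot x hx t)).imp fun r hr => hr.symm
    have hΔreal : Δ = ((ck + xk + (-et + pt) : ℝ) : WithBot ℝ) := by
      rw [← hfx', hck, hxk, het, hpt, tinv_coe,
        ← WithBot.coe_add, ← WithBot.coe_add, ← WithBot.coe_add, WithBot.coe_eq_coe]
    -- key real inequalities
    have ineq1 : ck + dk ≤ ck + xk + (-et + pt) := by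
      have : c k + d k ≤ Δ := by
        rw [hΔ']; exact Finset.le_sup (f := fun i => c i + d i) (Finset.mem_univ k)
      rw [hck, hdk, hΔreal, ← WithBot.coe_add, WithBot.coe_le_coe] at this
      exact this
    have ineq2 : atk + xk ≤ et := by
      have := hAx_ge x t k
      rw [hatk, hxk, het, ← WithBot.coe_add, WithBot.coe_le_coe] at this
      exact this
    have ineq3 : -atk + pt ≤ dk := by
      have := hd_le k t
      rw [hatk, tinv_coe, hpt, hdk, ← WithBot.coe_add, WithBot.coe_le_coe] at this
      exact this
    have heq1 : dk = pt - atk := by linarith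
    have heq2 : et = atk + xk := by linarith
    refine ⟨xk - dk, k, t, ?_, ?_, ?_, ?_⟩
    · intro i
      have hle : c i + d i ≤ Δ := by
        rw [hΔ']; exact Finset.le_sup (f := fun i => c i + d i) (Finset.mem_univ i)
      have hΔck : Δ = c k + d k := by
        rw [hΔreal, hck, hdk, ← WithBot.coe_add, WithBot.coe_eq_coe]
        linarith
      rw [← hΔck]; exact hle
    · intro i
      have := hd_le k i
      rw [hdk] at this
      refine le_trans this ?_
      rw [hatk, tinv_coe, hpt, ← WithBot.coe_add, WithBot.coe_le_coe]
      linarith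
    · rw [hxk, hdk, ← WithBot.coe_add, WithBot.coe_eq_coe]
      ring
    · intro j hjk
      obtain ⟨xj, hxj⟩ : ∃ r : ℝ, x j = ↑r :=
        (WithBot.ne_bot_iff_exists.mp (hx j)).imp fun r hr => hr.symm
      obtain ⟨atj, hatj⟩ : ∃ r : ℝ, A t j = ↑r :=
        (WithBot.ne_bot_iff_exists.mp (hA t j)).imp fun r hr => hr.symm
      have := hAx_ge x t j
      rw [hatj, hxj, het, ← WithBot.coe_add, WithBot.coe_le_coe] at this
      rw [hxj, hatj, tinv_coe, hpt, ← WithBot.coe_add, ← WithBot.coe_add, WithBot.coe_le_coe]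
      linarith
  -- assemble
  constructor
  · constructor
    · -- membership: construct a maximizer
      obtain ⟨k, -, hk⟩ := Finset.exists_mem_eq_sup Finset.univ hnne fun i => c i + d i
      obtain ⟨s, -, hs⟩ :=
        Finset.exists_mem_eq_sup Finset.univ hmne fun t => tinv (A t k) + p t
      refine ⟨fun j => tinv (A s j) + p s, ?_, ?_⟩
      · exact fun j => WithBot.add_ne_bot.mpr ⟨tinv_ne_bot (hA s j), hp s⟩
      · refine key2 _ (fun j => WithBot.add_ne_bot.mpr ⟨tinv_ne_bot (hA s j), hp s⟩)
          0 k s ?_ ?_ ?_ ?_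
        · intro i
          rw [← hk]
          exact Finset.le_sup (f := fun i => c i + d i) (Finset.mem_univ i)
        · intro i
          rw [← hs]
          exact Finset.le_sup (f := fun t => tinv (A t k) + p t) (Finset.mem_univ i)
        · show tinv (A s k) + p s = ((0 : ℝ) : WithBot ℝ) + d k
          rw [WithBot.coe_zero, zero_add]
          exact hs.symm
        · intro j _
          show tinv (A s j) + p s ≤ ((0 : ℝ) : WithBot ℝ) + (tinv (A s j) + p s)
          rw [WithBot.coe_zero, zero_add]
    · rintro v ⟨x, hxr, rfl⟩
      exact hub x hxr
  · intro x hxr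
    constructor
    · intro hfx
      exact key3 x hxr hfx
    · rintro ⟨α, k, s, h1, h2, h3, h4⟩
      exact key2 x hxr α k s h1 h2 h3 h4
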